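/- Let γ ∈ (0,1] and let α₁, α₂, …, α_d be distinct numbers in the interval (1/(1+γ), 1). For each j ∈ {1,…,d} let f_j : ℝ → ℝ be continuous and strictly C^{0,α_j} at every point of ℝ, and define f : ℝ^d → ℝ by f(x₁, …, x_d) = Σ_{j=1}^d f_j(x_j). Then f is continuous and, for every C¹ curve c : [a,b] → ℝ^d of unit speed (‖c′(s)‖ = 1 for all s) satisfying ‖c′(s₂) − c′(s₁)‖ ≤ ρ|s₂ − s₁|^γ for all s₁, s₂ ∈ [a,b] (for some ρ ≥ 0), the composition f∘c is not differentiable at any point of (a,b). -/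

import Mathlib

open Set Filter Topology

/-- `f` is strictly `C^{0,α}` at `x₀`, relative to the set `I`:
`limsup_{x→x₀, x ∈ I} |f x - f x₀|/|x-x₀|^α < ∞` and, for every `β > α`,
`limsup_{x→x₀, x ∈ I} |f x - f x₀|/|x-x₀|^β = ∞`. -/
def StrictHolderAt (f : ℝ → ℝ) (I : Set ℝ) (α x₀ : ℝ) : Prop :=
  (∃ M : ℝ, ∀ᶠ x in 𝓝[I \ {x₀}] x₀, |f x - f x₀| / |x - x₀| ^ α ≤ M) ∧
  ∀ β : ℝ, α < β → ∀ M : ℝ, ∃ᶠ x in 𝓝[I \ {x₀}] x₀, M < |f x - f x₀| / |x - x₀| ^ β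

set_option maxHeartbeats 2000000 in
/-- Let `γ ∈ (0,1]` and let `α₁, …, α_d` be distinct numbers in `(1/(1+γ), 1)`. If each
`f_j : ℝ → ℝ` is continuous and strictly `C^{0,α_j}` at every point, then
`f (x₁, …, x_d) = Σ_j f_j (x_j)` is continuous and, for every unit-speed `C^{1,γ}` curve
`c : [a,b] → ℝ^d`, the composition `f ∘ c` is differentiable at no point of `(a,b)`. -/
theorem sum_strictHolder_nowhere_differentiable_along_curves {d : ℕ} (γ : ℝ)
    (hγ : γ ∈ Ioc (0 : ℝ) 1) (α : Fin d → ℝ) (hinj : Function.Injective α)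
    (hα : ∀ j, α j ∈ Ioo (1 / (1 + γ)) 1) (f : Fin d → ℝ → ℝ)
    (hfc : ∀ j, Continuous (f j)) (hf : ∀ j x₀, StrictHolderAt (f j) univ (α j) x₀)
    (a b : ℝ) (c : ℝ → EuclideanSpace ℝ (Fin d)) (hc : ContDiffOn ℝ 1 c (Icc a b))
    (hunit : ∀ s ∈ Icc a b, ‖derivWithin c (Icc a b) s‖ = 1) (ρ : ℝ) (hρ : 0 ≤ ρ)
    (hH : ∀ s₁ ∈ Icc a b, ∀ s₂ ∈ Icc a b,
      ‖derivWithin c (Icc a b) s₂ - derivWithin c (Icc a b) s₁‖ ≤ ρ * |s₂ - s₁| ^ γ) :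
    Continuous (fun x : EuclideanSpace ℝ (Fin d) => ∑ j, f j (x j)) ∧
    ∀ s₀ ∈ Ioo a b,
      ¬ DifferentiableWithinAt ℝ
        ((fun x : EuclideanSpace ℝ (Fin d) => ∑ j, f j (x j)) ∘ c) (Icc a b) s₀ := by
  have hγ0 : (0:ℝ) < γ := hγ.1
  have hγ1 : γ ≤ 1 := hγ.2
  have h1γ : (0:ℝ) < 1 + γ := by linarith
  have coord_le : ∀ (x : EuclideanSpace ℝ (Fin d)) (j : Fin d), |x j| ≤ ‖x‖ := by
    intro x j
    rw [EuclideanSpace.norm_eq, ← Real.sqrt_sq_eq_abs]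
    apply Real.sqrt_le_sqrt
    have := Finset.single_le_sum (f := fun i => ‖x i‖ ^ 2) (fun i _ => by positivity)
      (Finset.mem_univ j)
    simpa [sq_abs] using this
  have hα0 : ∀ j, 0 < α j := fun j => lt_trans (by positivity) (hα j).1
  have hα1γ : ∀ j, 1 < (1 + γ) * α j := by
    intro j
    have := (hα j).1
    rw [div_lt_iff₀ h1γ] at this
    linarith [this]
  refine ⟨continuous_finset_sum _ fun j _ =>
    (hfc j).comp (EuclideanSpace.proj (𝕜 := ℝ) j).continuous, ?_⟩
  intro s₀ hs₀ hdiff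
  have hs₀' : s₀ ∈ Icc a b := Ioo_subset_Icc_self hs₀
  have hIcc_nhds : Icc a b ∈ 𝓝 s₀ := Icc_mem_nhds hs₀.1 hs₀.2
  have hnhds : 𝓝[Icc a b] s₀ = 𝓝 s₀ := nhdsWithin_eq_nhds.2 hIcc_nhds
  have hIccEv : ∀ᶠ s in 𝓝 s₀, s ∈ Icc a b := hIcc_nhds
  set v := derivWithin c (Icc a b) s₀ with hv
  have hdc : DifferentiableOn ℝ c (Icc a b) := hc.differentiableOn one_ne_zero
  have hder : ∀ t ∈ Icc a b, HasDerivWithinAt c (derivWithin c (Icc a b) t) (Icc a b) t :=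
    fun t ht => (hdc t ht).hasDerivWithinAt
  -- Lipschitz bound for c
  have hlip : ∀ s ∈ Icc a b, ‖c s - c s₀‖ ≤ |s - s₀| := by
    intro s hs
    have := Convex.norm_image_sub_le_of_norm_hasDerivWithin_le hder
      (fun t ht => le_of_eq (hunit t ht)) (convex_Icc a b) hs₀' hs
    simpa using this
  -- Taylor estimate for components
  have hTaylor : ∀ s ∈ Icc a b, ∀ j : Fin d,
      |c s j - c s₀ j - v j * (s - s₀)| ≤ ρ * |s - s₀| ^ γ * |s - s₀| := by
    intro s hs j
    have hsub : uIcc s₀ s ⊆ Icc a b := uIcc_subset_Icc hs₀' hs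
    have hder' : ∀ t ∈ uIcc s₀ s,
        HasDerivWithinAt (fun u => c u j - v j * u)
          (derivWithin c (Icc a b) t j - v j) (uIcc s₀ s) t := by
      intro t ht
      have h1 : HasDerivWithinAt c (derivWithin c (Icc a b) t) (uIcc s₀ s) t :=
        (hder t (hsub ht)).mono hsub
      have h2 := (EuclideanSpace.proj (𝕜 := ℝ) j).hasFDerivAt.comp_hasDerivWithinAt t h1
      simpa [Function.comp_def, Pi.sub_def] using h2.sub ((hasDerivWithinAt_id t _).const_mul (v j))
    have hbound : ∀ t ∈ uIcc s₀ s,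
        ‖derivWithin c (Icc a b) t j - v j‖ ≤ ρ * |s - s₀| ^ γ := by
      intro t ht
      have h1 : |derivWithin c (Icc a b) t j - v j| ≤ ‖derivWithin c (Icc a b) t - v‖ := by
        have := coord_le (derivWithin c (Icc a b) t - v) j
        simpa using this
      have hts : |t - s₀| ≤ |s - s₀| := by
        rcases le_total s₀ s with h | h
        · rw [uIcc_of_le h] at ht
          rw [abs_of_nonneg (by linarith [ht.1]), abs_of_nonneg (by linarith)]
          linarith [ht.2]
        · rw [uIcc_of_ge h] at ht
          rw [abs_of_nonpos (by linarith [ht.2]), abs_of_nonpos (by linarith)]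
          linarith [ht.1]
      refine (h1.trans (hH s₀ hs₀' t (hsub ht))).trans ?_
      exact mul_le_mul_of_nonneg_left (Real.rpow_le_rpow (abs_nonneg _) hts hγ0.le) hρ
    have key := Convex.norm_image_sub_le_of_norm_hasDerivWithin_le hder' hbound
      (convex_uIcc s₀ s) left_mem_uIcc right_mem_uIcc
    have heq : (c s j - v j * s) - (c s₀ j - v j * s₀) = c s j - c s₀ j - v j * (s - s₀) := by
      ring
    simpa [heq] using key
  classical
  have hv1 : ‖v‖ = 1 := hunit s₀ hs₀'
  have hex : ∃ j, v j ≠ 0 := by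
    by_contra h
    push_neg at h
    have hz : v = 0 := by ext j; exact h j
    rw [hz] at hv1; simp at hv1
  set T : Finset (Fin d) := Finset.univ.filter (fun j => v j ≠ 0) with hTdef
  have hTne : T.Nonempty := by
    obtain ⟨j, hj⟩ := hex
    exact ⟨j, by simp [hTdef, hj]⟩
  obtain ⟨j₀, hj₀T, hj₀min⟩ := T.exists_min_image α hTne
  have hw : v j₀ ≠ 0 := by
    have h := hj₀T; rw [hTdef, Finset.mem_filter] at h; exact h.2
  set w := v j₀ with hwdef
  have hW : 0 < |w| := abs_pos.2 hw
  set S : Finset ℝ := insert (1:ℝ) ((T.erase j₀).image α) with hSdef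
  have hSne : S.Nonempty := ⟨1, Finset.mem_insert_self _ _⟩
  set m := S.min' hSne with hmdef
  have hm1 : m ≤ 1 := Finset.min'_le _ _ (Finset.mem_insert_self _ _)
  have hmj : ∀ j ∈ T.erase j₀, m ≤ α j := fun j hj =>
    Finset.min'_le _ _ (Finset.mem_insert_of_mem (Finset.mem_image_of_mem α hj))
  have hαm : α j₀ < m := by
    rw [hmdef, Finset.lt_min'_iff]
    intro y hy
    rcases Finset.mem_insert.1 hy with rfl | hy
    · exact (hα j₀).2
    · obtain ⟨j, hj, rfl⟩ := Finset.mem_image.1 hy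
      have hjT := Finset.mem_of_mem_erase hj
      have hne : j ≠ j₀ := Finset.ne_of_mem_erase hj
      exact lt_of_le_of_ne (hj₀min j hjT) fun h => hne (hinj h.symm)
  set β := (α j₀ + m) / 2 with hβdef
  have hβα : α j₀ < β := by rw [hβdef]; linarith
  have hβm : β < m := by rw [hβdef]; linarith
  have hβ1 : β ≤ 1 := le_of_lt (lt_of_lt_of_le hβm hm1)
  have hβ0 : 0 < β := lt_trans (hα0 j₀) hβα
  -- continuity of coordinates at s₀
  have hca : ContinuousAt c s₀ := (hc.continuousOn s₀ hs₀').continuousAt hIcc_nhds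
  have hcj : ∀ j : Fin d, ContinuousAt (fun s => c s j) s₀ := fun j =>
    ((EuclideanSpace.proj (𝕜 := ℝ) j).continuous.continuousAt).comp hca
  have h1ev : ∀ᶠ s in 𝓝 s₀, |s - s₀| ≤ 1 := by
    filter_upwards [Metric.ball_mem_nhds s₀ one_pos] with s hs
    rw [Metric.mem_ball, Real.dist_eq] at hs; exact hs.le
  -- upper Hölder bounds at the points c s₀ j
  have hup : ∀ j : Fin d, ∃ M : ℝ, 0 ≤ M ∧ ∀ᶠ x in 𝓝 (c s₀ j),
      |f j x - f j (c s₀ j)| ≤ M * |x - c s₀ j| ^ (α j) := by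
    intro j
    obtain ⟨M, hM⟩ := (hf j (c s₀ j)).1
    rw [eventually_nhdsWithin_iff] at hM
    refine ⟨max M 0, le_max_right _ _, ?_⟩
    filter_upwards [hM] with x hx
    rcases eq_or_ne x (c s₀ j) with rfl | hne
    · simp [Real.zero_rpow (ne_of_gt (hα0 j))]
    · have h1 := hx ⟨trivial, hne⟩
      have hpos : 0 < |x - c s₀ j| ^ (α j) :=
        Real.rpow_pos_of_pos (abs_pos.2 (sub_ne_zero.2 hne)) _
      rw [div_le_iff₀ hpos] at h1
      exact h1.trans (mul_le_mul_of_nonneg_right (le_max_left _ _) hpos.le)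
  -- for each j ≠ j₀, an eventual bound with exponent β
  have hEj : ∀ j : Fin d, ∃ K : ℝ, 0 ≤ K ∧ (j ≠ j₀ → ∀ᶠ s in 𝓝 s₀,
      |f j (c s j) - f j (c s₀ j)| ≤ K * |s - s₀| ^ β) := by
    intro j
    obtain ⟨M, hM0, hM⟩ := hup j
    have hev0 : ∀ᶠ s in 𝓝 s₀, |f j (c s j) - f j (c s₀ j)| ≤ M * |c s j - c s₀ j| ^ (α j) :=
      (hcj j).eventually hM
    by_cases hvj : v j = 0
    · refine ⟨M * ρ ^ (α j), by positivity, fun _ => ?_⟩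
      filter_upwards [hev0, hIccEv, h1ev] with s hs hsI h1
      have htay := hTaylor s hsI j
      rw [hvj, zero_mul, sub_zero] at htay
      have htay' : |c s j - c s₀ j| ≤ ρ * |s - s₀| ^ (γ + 1) := by
        rw [Real.rpow_add' (abs_nonneg _) (by positivity), Real.rpow_one, ← mul_assoc]
        exact htay
      have hβe : β ≤ (γ + 1) * α j := le_trans hβ1 (le_of_lt (by
        have := hα1γ j; linarith [this]))
      calc |f j (c s j) - f j (c s₀ j)| ≤ M * |c s j - c s₀ j| ^ (α j) := hs
        _ ≤ M * (ρ * |s - s₀| ^ (γ + 1)) ^ (α j) :=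
            mul_le_mul_of_nonneg_left
              (Real.rpow_le_rpow (abs_nonneg _) htay' (hα0 j).le) hM0
        _ = M * ρ ^ (α j) * (|s - s₀| ^ ((γ + 1) * α j)) := by
            rw [Real.mul_rpow hρ (by positivity), Real.rpow_mul (abs_nonneg _)]
            ring
        _ ≤ M * ρ ^ (α j) * (|s - s₀| ^ β) := by
            apply mul_le_mul_of_nonneg_left _ (by positivity)
            exact Real.rpow_le_rpow_of_exponent_ge' (abs_nonneg _) h1 hβ0.le hβe
    · refine ⟨M, hM0, fun hj => ?_⟩
      have hjT : j ∈ T.erase j₀ := Finset.mem_erase.2 ⟨hj, by simp [hTdef, hvj]⟩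
      have hβαj : β ≤ α j := le_of_lt (lt_of_lt_of_le hβm (hmj j hjT))
      filter_upwards [hev0, hIccEv, h1ev] with s hs hsI h1
      have hc1 : |c s j - c s₀ j| ≤ |s - s₀| := by
        have h2 := coord_le (c s - c s₀) j
        simp only [PiLp.sub_apply] at h2
        exact h2.trans (hlip s hsI)
      calc |f j (c s j) - f j (c s₀ j)| ≤ M * |c s j - c s₀ j| ^ (α j) := hs
        _ ≤ M * |s - s₀| ^ (α j) :=
            mul_le_mul_of_nonneg_left (Real.rpow_le_rpow (abs_nonneg _) hc1 (hα0 j).le) hM0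
        _ ≤ M * |s - s₀| ^ β :=
            mul_le_mul_of_nonneg_left
              (Real.rpow_le_rpow_of_exponent_ge' (abs_nonneg _) h1 hβ0.le hβαj) hM0
  choose K hK0 hKev using hEj
  have hsum : ∀ᶠ s in 𝓝 s₀, ∀ j ∈ Finset.univ.erase j₀,
      |f j (c s j) - f j (c s₀ j)| ≤ K j * |s - s₀| ^ β :=
    (eventually_all_finset _).2 fun j hj => hKev j (Finset.ne_of_mem_erase hj)
  -- the differentiability assumption gives a little-o bound
  set lam := derivWithin ((fun x : EuclideanSpace ℝ (Fin d) => ∑ j, f j (x j)) ∘ c)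
    (Icc a b) s₀ with hlamdef
  have hgc := hdiff.hasDerivWithinAt
  rw [hasDerivWithinAt_iff_isLittleO, hnhds] at hgc
  have hlo := (Asymptotics.isLittleO_iff.1 hgc) one_pos
  set C : ℝ := |lam| + 1 + ∑ j ∈ Finset.univ.erase j₀, K j with hCdef
  have hC0 : 0 ≤ C := by
    have h1 : (0:ℝ) ≤ ∑ j ∈ Finset.univ.erase j₀, K j :=
      Finset.sum_nonneg fun j _ => hK0 j
    have := abs_nonneg lam
    rw [hCdef]; linarith
  have hFev : ∀ᶠ s in 𝓝 s₀, |f j₀ (c s j₀) - f j₀ (c s₀ j₀)| ≤ C * |s - s₀| ^ β := by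
    filter_upwards [hlo, hsum, h1ev] with s hls hsumS h1
    have hgdiff : ((fun x : EuclideanSpace ℝ (Fin d) => ∑ j, f j (x j)) ∘ c) s -
        ((fun x : EuclideanSpace ℝ (Fin d) => ∑ j, f j (x j)) ∘ c) s₀ =
        ∑ j, (f j (c s j) - f j (c s₀ j)) := by
      simp [Function.comp, Finset.sum_sub_distrib]
    have hsplit : f j₀ (c s j₀) - f j₀ (c s₀ j₀) =
        (((fun x : EuclideanSpace ℝ (Fin d) => ∑ j, f j (x j)) ∘ c) s -
          ((fun x : EuclideanSpace ℝ (Fin d) => ∑ j, f j (x j)) ∘ c) s₀) -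
        ∑ j ∈ Finset.univ.erase j₀, (f j (c s j) - f j (c s₀ j)) := by
      rw [hgdiff, ← Finset.add_sum_erase _ _ (Finset.mem_univ j₀)]
      ring
    have h2 : |((fun x : EuclideanSpace ℝ (Fin d) => ∑ j, f j (x j)) ∘ c) s -
        ((fun x : EuclideanSpace ℝ (Fin d) => ∑ j, f j (x j)) ∘ c) s₀| ≤
        (|lam| + 1) * |s - s₀| := by
      have h3 : |((fun x : EuclideanSpace ℝ (Fin d) => ∑ j, f j (x j)) ∘ c) s -
          ((fun x : EuclideanSpace ℝ (Fin d) => ∑ j, f j (x j)) ∘ c) s₀ -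
          (s - s₀) * lam| ≤ |s - s₀| := by
        simpa [Real.norm_eq_abs, smul_eq_mul] using hls
      have h4 := abs_add_le (((fun x : EuclideanSpace ℝ (Fin d) => ∑ j, f j (x j)) ∘ c) s -
          ((fun x : EuclideanSpace ℝ (Fin d) => ∑ j, f j (x j)) ∘ c) s₀ -
          (s - s₀) * lam) ((s - s₀) * lam)
      rw [sub_add_cancel] at h4
      have h5 : |(s - s₀) * lam| = |s - s₀| * |lam| := abs_mul _ _
      nlinarith [abs_nonneg lam, abs_nonneg (s - s₀)]
    have h6 : |∑ j ∈ Finset.univ.erase j₀, (f j (c s j) - f j (c s₀ j))| ≤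
        (∑ j ∈ Finset.univ.erase j₀, K j) * |s - s₀| ^ β := by
      refine (Finset.abs_sum_le_sum_abs _ _).trans ?_
      rw [Finset.sum_mul]
      exact Finset.sum_le_sum hsumS
    have h7 : |s - s₀| ≤ |s - s₀| ^ β := by
      nth_rewrite 1 [← Real.rpow_one |s - s₀|]
      exact Real.rpow_le_rpow_of_exponent_ge' (abs_nonneg _) h1 hβ0.le hβ1
    rw [hsplit]
    have h10 := abs_sub (((fun x : EuclideanSpace ℝ (Fin d) => ∑ j, f j (x j)) ∘ c) s -
        ((fun x : EuclideanSpace ℝ (Fin d) => ∑ j, f j (x j)) ∘ c) s₀)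
      (∑ j ∈ Finset.univ.erase j₀, (f j (c s j) - f j (c s₀ j)))
    have h9 : (|lam| + 1) * |s - s₀| ≤ (|lam| + 1) * |s - s₀| ^ β :=
      mul_le_mul_of_nonneg_left h7 (by positivity)
    rw [hCdef, add_mul, add_mul]
    linarith
  -- choose δ
  obtain ⟨ε, hε0, hεF⟩ := Metric.eventually_nhds_iff.1 hFev
  set δ₁ := (|w| / (2 * (ρ + 1))) ^ (1/γ) with hδ₁def
  have hδ₁0 : 0 < δ₁ := Real.rpow_pos_of_pos (by positivity) _
  set δ := min (min (ε/2) 1) (min (min (s₀ - a) (b - s₀)) δ₁) with hδdef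
  have hδ0 : 0 < δ :=
    lt_min (lt_min (by linarith) one_pos)
      (lt_min (lt_min (by linarith [hs₀.1]) (by linarith [hs₀.2])) hδ₁0)
  have hδε : δ ≤ ε / 2 := le_trans (min_le_left _ _) (min_le_left _ _)
  have hδa : δ ≤ s₀ - a :=
    le_trans (min_le_right _ _) (le_trans (min_le_left _ _) (min_le_left _ _))
  have hδb : δ ≤ b - s₀ :=
    le_trans (min_le_right _ _) (le_trans (min_le_left _ _) (min_le_right _ _))
  have hδδ₁ : δ ≤ δ₁ := le_trans (min_le_right _ _) (min_le_right _ _)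
  have hsub : Icc (s₀ - δ) (s₀ + δ) ⊆ Icc a b :=
    Icc_subset_Icc (by linarith) (by linarith)
  have hρδ : ρ * δ ^ γ ≤ |w| / 2 := by
    have h1 : δ ^ γ ≤ δ₁ ^ γ := Real.rpow_le_rpow hδ0.le hδδ₁ hγ0.le
    have h2 : δ₁ ^ γ = |w| / (2 * (ρ + 1)) := by
      rw [hδ₁def, ← Real.rpow_mul (by positivity), one_div,
        inv_mul_cancel₀ hγ0.ne', Real.rpow_one]
    have h3 : ρ * δ ^ γ ≤ ρ * (|w| / (2 * (ρ + 1))) :=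
      mul_le_mul_of_nonneg_left (h1.trans_eq h2) hρ
    refine h3.trans ?_
    have h4 : ρ * (|w| / (2 * (ρ + 1))) = ρ * |w| / (2 * (ρ + 1)) := by ring
    rw [h4, div_le_div_iff₀ (by positivity) (by norm_num)]
    nlinarith [hW.le]
  have habs2 : ∀ s ∈ Icc (s₀ - δ) (s₀ + δ), |s - s₀| ≤ δ := by
    intro s hs
    rw [abs_le]; exact ⟨by linarith [hs.1], by linarith [hs.2]⟩
  have hkey : ∀ s ∈ Icc (s₀ - δ) (s₀ + δ),
      |c s j₀ - c s₀ j₀ - w * (s - s₀)| ≤ |w| / 2 * |s - s₀| := by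
    intro s hs
    refine (hTaylor s (hsub hs) j₀).trans ?_
    have h1 : ρ * |s - s₀| ^ γ ≤ |w| / 2 :=
      le_trans (mul_le_mul_of_nonneg_left
        (Real.rpow_le_rpow (abs_nonneg _) (habs2 s hs) hγ0.le) hρ) hρδ
    exact mul_le_mul_of_nonneg_right h1 (abs_nonneg _)
  have hlow : ∀ s ∈ Icc (s₀ - δ) (s₀ + δ),
      |w| / 2 * |s - s₀| ≤ |c s j₀ - c s₀ j₀| := by
    intro s hs
    have h1 := hkey s hs
    have h2 : |w * (s - s₀)| - |c s j₀ - c s₀ j₀| ≤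
        |c s j₀ - c s₀ j₀ - w * (s - s₀)| := by
      have h := abs_sub_abs_le_abs_sub (w * (s - s₀)) (c s j₀ - c s₀ j₀)
      rwa [abs_sub_comm (w * (s - s₀)) (c s j₀ - c s₀ j₀)] at h
    rw [abs_mul] at h2
    linarith
  -- surjectivity onto a neighbourhood of c s₀ j₀ via the IVT
  have hccont : ContinuousOn (fun s => c s j₀) (Icc (s₀ - δ) (s₀ + δ)) :=
    (EuclideanSpace.proj (𝕜 := ℝ) j₀).continuous.comp_continuousOn
      (hc.continuousOn.mono hsub)
  have hle' : s₀ - δ ≤ s₀ + δ := by linarith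
  have hsurj : ∀ x : ℝ, |x - c s₀ j₀| < |w| / 2 * δ →
      ∃ s ∈ Icc (s₀ - δ) (s₀ + δ), c s j₀ = x := by
    intro x hx
    have huIcc : uIcc (s₀ - δ) (s₀ + δ) = Icc (s₀ - δ) (s₀ + δ) := uIcc_of_le hle'
    have hm1' : s₀ - δ ∈ Icc (s₀ - δ) (s₀ + δ) := ⟨le_refl _, hle'⟩
    have hp1 : s₀ + δ ∈ Icc (s₀ - δ) (s₀ + δ) := ⟨hle', le_refl _⟩
    have h1 := hkey _ hm1'
    have h2 := hkey _ hp1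
    rw [show s₀ - δ - s₀ = -δ by ring] at h1
    rw [show s₀ + δ - s₀ = δ by ring] at h2
    rw [abs_neg, abs_of_nonneg hδ0.le] at h1
    rw [abs_of_nonneg hδ0.le] at h2
    rw [abs_le] at h1 h2
    rw [abs_lt] at hx
    have hmem : x ∈ uIcc ((fun s => c s j₀) (s₀ - δ)) ((fun s => c s j₀) (s₀ + δ)) := by
      rw [Set.mem_uIcc]
      rcases hw.lt_or_gt with hneg | hpos
      · right
        rw [abs_of_neg hneg] at hx h1 h2
        show c (s₀ + δ) j₀ ≤ x ∧ x ≤ c (s₀ - δ) j₀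
        constructor
        · nlinarith [h2.2, hx.1]
        · nlinarith [h1.1, hx.2]
      · left
        rw [abs_of_pos hpos] at hx h1 h2
        show c (s₀ - δ) j₀ ≤ x ∧ x ≤ c (s₀ + δ) j₀
        constructor
        · nlinarith [h1.2, hx.1]
        · nlinarith [h2.1, hx.2]
    have := intermediate_value_uIcc (by rwa [huIcc]) hmem
    obtain ⟨s, hsmem, hsx⟩ := this
    rw [huIcc] at hsmem
    exact ⟨s, hsmem, hsx⟩
  -- the contradiction
  have hfreq := (hf j₀ (c s₀ j₀)).2 β hβα (C * (2 / |w|) ^ β)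
  have hev : ∀ᶠ x in 𝓝[univ \ {c s₀ j₀}] (c s₀ j₀),
      |f j₀ x - f j₀ (c s₀ j₀)| / |x - c s₀ j₀| ^ β ≤ C * (2 / |w|) ^ β := by
    rw [eventually_nhdsWithin_iff]
    filter_upwards [Metric.ball_mem_nhds (c s₀ j₀)
      (show (0:ℝ) < |w| / 2 * δ by positivity)] with x hxball hxmem
    have hne : x ≠ c s₀ j₀ := hxmem.2
    rw [Metric.mem_ball, Real.dist_eq] at hxball
    obtain ⟨s, hsmem, hsx⟩ := hsurj x hxball
    have habs' : |s - s₀| ≤ δ := habs2 s hsmem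
    have hlow' := hlow s hsmem
    rw [hsx] at hlow'
    have hss : |s - s₀| ≤ 2 / |w| * |x - c s₀ j₀| := by
      rw [div_mul_eq_mul_div, le_div_iff₀ hW]
      linarith
    have hdist : dist s s₀ < ε := by
      rw [Real.dist_eq]
      exact lt_of_le_of_lt (habs'.trans hδε) (by linarith)
    have hFs := hεF hdist
    rw [hsx] at hFs
    have hxpos : 0 < |x - c s₀ j₀| := abs_pos.2 (sub_ne_zero.2 hne)
    have hbpos : 0 < |x - c s₀ j₀| ^ β := Real.rpow_pos_of_pos hxpos _
    rw [div_le_iff₀ hbpos]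
    calc |f j₀ x - f j₀ (c s₀ j₀)| ≤ C * |s - s₀| ^ β := hFs
      _ ≤ C * (2 / |w| * |x - c s₀ j₀|) ^ β :=
          mul_le_mul_of_nonneg_left (Real.rpow_le_rpow (abs_nonneg _) hss hβ0.le) hC0
      _ = C * (2 / |w|) ^ β * |x - c s₀ j₀| ^ β := by
          rw [Real.mul_rpow (by positivity) (abs_nonneg _)]; ring
  obtain ⟨x, hgt, hle⟩ := (hfreq.and_eventually hev).exists
  exact absurd hle (not_le.2 hgt)
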